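/- Let X := [-1,1]^d and P a probability measure on X × {-1,1} with fixed posterior version η. Assume P has ME α ∈ (0,∞] with constant c_ME and that Δ_η controls the noise from below with exponent γ ∈ (0,∞) and constant c_LC. Fix r > 0 and the set N_r. Then for every measurable f : X → {-1,1} and every t > 0, with f*_{L,P} := sign(2η−1) a Bayes decision function: E_P(L_{N_r}∘f − L_{N_r}∘f*_{L,P})² ≤ t^{-1} E_P(L_{N_r}∘f − L_{N_r}∘f*_{L,P}) + min{ (3 c_ME r)^α , c_ME^α (c_LC t)^{α/γ} }. -/

import Mathlib

open MeasureTheory Set Metric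
open scoped Classical ENNReal NNReal

noncomputable section

namespace RefinedMargin

abbrev Pt (d : ℕ) := Fin d → ℝ

/-- The input space `X = [-1,1]^d` (with the supremum norm coming from `Fin d → ℝ`). -/
def cubeX (d : ℕ) : Set (Pt d) := Set.Icc (fun _ => (-1 : ℝ)) (fun _ => (1 : ℝ))

variable {d : ℕ} {s : ℝ}

/-- `X_1 = {x ∈ X : η x > 1/2}`. -/
def X1 (η : Pt d → ℝ) : Set (Pt d) := {x | x ∈ cubeX d ∧ 1 / 2 < η x}

/-- `X_{-1} = {x ∈ X : η x < 1/2}`. -/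
def Xm1 (η : Pt d → ℝ) : Set (Pt d) := {x | x ∈ cubeX d ∧ η x < 1 / 2}

/-- `X_0 = {x ∈ X : η x = 1/2}`. -/
def X0 (η : Pt d → ℝ) : Set (Pt d) := {x | x ∈ cubeX d ∧ η x = 1 / 2}

/-- Distance to the decision boundary. -/
def Δ (η : Pt d → ℝ) (x : Pt d) : ℝ :=
  if x ∈ Xm1 η then Metric.infDist x (X1 η)
  else if x ∈ X1 η then Metric.infDist x (Xm1 η)
  else 0

/-- Relative boundary of `T` in `X`. -/
def relBoundary (X T : Set (Pt d)) : Set (Pt d) := closure T ∩ closure (X \ T) ∩ X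

/-- `T` is `m`-rectifiable: the image of a bounded subset of `ℝ^m` under a Lipschitz map. -/
def IsRectifiable (m : ℕ) (T : Set (Pt d)) : Prop :=
  ∃ (B : Set (Fin m → ℝ)) (g : (Fin m → ℝ) → Pt d) (K : NNReal),
    Bornology.IsBounded B ∧ LipschitzOnWith K g B ∧ g '' B = T

/-- Margin exponent `α` with constant `cME`. -/
def HasME (μ : Measure (Pt d)) (η : Pt d → ℝ) (α cME : ℝ) : Prop :=
  ∀ t : ℝ, 0 < t → μ {x | Δ η x < t} ≤ ENNReal.ofReal ((cME * t) ^ α)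

/-- Margin-noise exponent `β` with constant `cMNE`. -/
def HasMNE (μ : Measure (Pt d)) (η : Pt d → ℝ) (β cMNE : ℝ) : Prop :=
  ∀ t : ℝ, 0 < t → (∫ x in {x | Δ η x < t}, |2 * η x - 1| ∂μ) ≤ (cMNE * t) ^ β

/-- The distance to the decision boundary controls the noise from below with
exponent `γ` and constant `cLC`. -/
def LowerControl (μ : Measure (Pt d)) (η : Pt d → ℝ) (γ cLC : ℝ) : Prop :=
  ∀ᵐ x ∂μ, Δ η x ^ γ ≤ cLC * |2 * η x - 1|

/-- A partition of `ℝ^d` into (half-open) cubes of side length `s`. -/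
structure CubePartition (d : ℕ) (s : ℝ) where
  cell : ℕ → Set (Pt d)
  isCube : ∀ j, ∃ a : Pt d, cell j = {x | ∀ i, a i ≤ x i ∧ x i < a i + s}
  covers : ∀ x : Pt d, ∃! j, x ∈ cell j

namespace CubePartition

/-- Index of the unique cell containing `x`. -/
def idx (𝒜 : CubePartition d s) (x : Pt d) : ℕ := (𝒜.covers x).choose

/-- The unique cell `A(x)` containing `x`. -/
def cellOf (𝒜 : CubePartition d s) (x : Pt d) : Set (Pt d) := 𝒜.cell (𝒜.idx x)

/-- Indices of cells intersecting `X`. -/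
def J (𝒜 : CubePartition d s) : Set ℕ := {j | (𝒜.cell j ∩ cubeX d).Nonempty}

/-- Indices of cells near the decision boundary. -/
def JN (𝒜 : CubePartition d s) (η : Pt d → ℝ) (r : ℝ) : Set ℕ :=
  {j | j ∈ 𝒜.J ∧ ∀ x ∈ 𝒜.cell j ∩ cubeX d, Δ η x ≤ 3 * r}

/-- Indices of cells far from the decision boundary. -/
def JF (𝒜 : CubePartition d s) (η : Pt d → ℝ) (r : ℝ) : Set ℕ :=
  {j | j ∈ 𝒜.J ∧ ∀ x ∈ 𝒜.cell j ∩ cubeX d, r ≤ Δ η x}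

/-- `N_r`, the union of the cells near the decision boundary. -/
def Nr (𝒜 : CubePartition d s) (η : Pt d → ℝ) (r : ℝ) : Set (Pt d) := ⋃ j ∈ 𝒜.JN η r, 𝒜.cell j

/-- `F_r`, the union of the cells far from the decision boundary. -/
def Fr (𝒜 : CubePartition d s) (η : Pt d → ℝ) (r : ℝ) : Set (Pt d) := ⋃ j ∈ 𝒜.JF η r, 𝒜.cell j

end CubePartition

/-- `sign` with the convention `sign 0 = 1`. -/
def sgn (t : ℝ) : ℝ := if 0 ≤ t then 1 else -1

/-- The classification loss `L(y,t) = 1_{(-∞,0]}(y · sign t)`. -/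
def cLoss (y t : ℝ) : ℝ := if y * sgn t ≤ 0 then 1 else 0

/-- The restricted classification loss `L_T(x,y,t) = 1_T(x) L(y,t)`. -/
def rLoss (T : Set (Pt d)) (x : Pt d) (y t : ℝ) : ℝ := if x ∈ T then cLoss y t else 0

/-- The joint distribution `P` on `X × {-1,1} ⊆ ℝ^d × ℝ` built from the marginal `μ = P_X`
and the posterior probability `η`. -/
def joint (μ : Measure (Pt d)) (η : Pt d → ℝ) : Measure (Pt d × ℝ) :=
  μ.bind fun x =>
    ENNReal.ofReal (η x) • Measure.dirac (x, 1) + ENNReal.ofReal (1 - η x) • Measure.dirac (x, -1)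

/-- The risk `R_{L_T,P}(f)`. -/
def risk (P : Measure (Pt d × ℝ)) (T : Set (Pt d)) (f : Pt d → ℝ) : ℝ :=
  ∫ z, rLoss T z.1 z.2 (f z.1) ∂P

/-- The Bayes risk `R*_{L_T,P}`, the infimum over all measurable functions. -/
def bayesRisk (P : Measure (Pt d × ℝ)) (T : Set (Pt d)) : ℝ :=
  ⨅ f : { f : Pt d → ℝ // Measurable f }, risk P T f.1

/-- The Bayes decision function `sign (2η - 1)`. -/
def bayesF (η : Pt d → ℝ) (x : Pt d) : ℝ := sgn (2 * η x - 1)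

/-- The empirical risk of `f` on the dataset `D` for the restricted loss `L_T`. -/
def empRisk {n : ℕ} (D : Fin n → Pt d × ℝ) (T : Set (Pt d)) (f : Pt d → ℝ) : ℝ :=
  (∑ i, rLoss T (D i).1 (D i).2 (f (D i).1)) / (n : ℝ)

/-- `f_{D,s}`. -/
def fHat (𝒜 : CubePartition d s) {n : ℕ} (D : Fin n → Pt d × ℝ) (x : Pt d) : ℝ :=
  ((∑ i, if (D i).2 = 1 ∧ (D i).1 ∈ 𝒜.cellOf x then (1 : ℝ) else 0) -
      ∑ i, if (D i).2 = -1 ∧ (D i).1 ∈ 𝒜.cellOf x then (1 : ℝ) else 0) / (n : ℝ)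

/-- The empirical histogram rule `h_{D,s} = sign f_{D,s}`. -/
def histRule (𝒜 : CubePartition d s) {n : ℕ} (D : Fin n → Pt d × ℝ) (x : Pt d) : ℝ :=
  sgn (fHat 𝒜 D x)

/-- `f_{P,s}`. -/
def fBar (𝒜 : CubePartition d s) (P : Measure (Pt d × ℝ)) (x : Pt d) : ℝ :=
  (P (𝒜.cellOf x ×ˢ ({1} : Set ℝ))).toReal - (P (𝒜.cellOf x ×ˢ ({-1} : Set ℝ))).toReal

/-- The infinite-sample histogram rule `h_{P,s} = sign f_{P,s}`. -/
def histRuleP (𝒜 : CubePartition d s) (P : Measure (Pt d × ℝ)) (x : Pt d) : ℝ :=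
  sgn (fBar 𝒜 P x)

/-- The class `𝓕` of `±1`-valued functions which are constant on the cells meeting `X`
(and `0` elsewhere). -/
def histClass (𝒜 : CubePartition d s) : Set (Pt d → ℝ) :=
  {f | ∃ c : ℕ → ℝ, (∀ j, c j = 1 ∨ c j = -1) ∧
    ∀ x, f x = if 𝒜.idx x ∈ 𝒜.J then c (𝒜.idx x) else 0}

/-- The `n`-fold product measure `P^n`. -/
def Pn (μ : Measure (Pt d)) (η : Pt d → ℝ) (n : ℕ) : Measure (Fin n → Pt d × ℝ) :=
  Measure.pi fun _ => joint μ η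

section Aux

variable {d : ℕ} {s : ℝ}

lemma measurable_sgn : Measurable sgn := by
  unfold sgn
  exact Measurable.ite (measurableSet_le measurable_const measurable_id)
    measurable_const measurable_const

lemma measurableSet_cell (𝒜 : CubePartition d s) (j : ℕ) : MeasurableSet (𝒜.cell j) := by
  obtain ⟨a, ha⟩ := 𝒜.isCube j
  rw [ha]
  have : {x : Pt d | ∀ i, a i ≤ x i ∧ x i < a i + s} =
      ⋂ i, (fun x : Pt d => x i) ⁻¹' (Set.Ico (a i) (a i + s)) := by
    ext x; simp [Set.mem_Ico]
  rw [this]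
  exact MeasurableSet.iInter fun i => (measurable_pi_apply i) measurableSet_Ico

lemma measurableSet_Nr (𝒜 : CubePartition d s) (η : Pt d → ℝ) (r : ℝ) :
    MeasurableSet (𝒜.Nr η r) :=
  MeasurableSet.biUnion (Set.to_countable _) fun j _ => measurableSet_cell 𝒜 j

lemma measurableSet_cubeX : MeasurableSet (cubeX d) := measurableSet_Icc

lemma measurable_Δ {η : Pt d → ℝ} (hη : Measurable η) : Measurable (Δ η) := by
  unfold Δ
  have h1 : MeasurableSet (X1 η) :=
    measurableSet_cubeX.inter (measurableSet_lt measurable_const hη)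
  have hm1 : MeasurableSet (Xm1 η) :=
    measurableSet_cubeX.inter (measurableSet_lt hη measurable_const)
  exact Measurable.ite hm1 (continuous_infDist_pt _).measurable
    (Measurable.ite h1 (continuous_infDist_pt _).measurable measurable_const)

lemma measurable_bayesF {η : Pt d → ℝ} (hη : Measurable η) : Measurable (bayesF η) :=
  measurable_sgn.comp ((hη.const_mul 2).sub measurable_const)

lemma measurable_rLossF {T : Set (Pt d)} (hT : MeasurableSet T) {g : Pt d → ℝ}
    (hg : Measurable g) : Measurable fun z : Pt d × ℝ => rLoss T z.1 z.2 (g z.1) := by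
  unfold rLoss cLoss
  refine Measurable.ite (measurable_fst hT) (Measurable.ite ?_ measurable_const measurable_const)
    measurable_const
  exact measurableSet_le (measurable_snd.mul
    (measurable_sgn.comp (hg.comp measurable_fst))) measurable_const

lemma measurable_kernel {η : Pt d → ℝ} (hη : Measurable η) :
    Measurable (fun x : Pt d =>
      ENNReal.ofReal (η x) • Measure.dirac (x, (1:ℝ)) +
        ENNReal.ofReal (1 - η x) • Measure.dirac (x, (-1:ℝ))) := by
  apply Measure.measurable_of_measurable_coe
  intro t ht
  simp only [Measure.coe_add, Pi.add_apply, Measure.smul_apply, smul_eq_mul,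
    Measure.dirac_apply' _ ht]
  refine Measurable.add ?_ ?_
  · exact (ENNReal.measurable_ofReal.comp hη).mul
      ((measurable_one.indicator ht).comp (measurable_id.prodMk measurable_const))
  · exact (ENNReal.measurable_ofReal.comp (measurable_const.sub hη)).mul
      ((measurable_one.indicator ht).comp (measurable_id.prodMk measurable_const))

lemma lintegral_joint {μ : Measure (Pt d)} {η : Pt d → ℝ} (hη : Measurable η)
    {F : Pt d × ℝ → ℝ≥0∞} (hF : Measurable F) :
    ∫⁻ z, F z ∂(joint μ η) =
      ∫⁻ x, ENNReal.ofReal (η x) * F (x, 1) + ENNReal.ofReal (1 - η x) * F (x, -1) ∂μ := by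
  rw [joint, Measure.lintegral_bind (measurable_kernel hη).aemeasurable hF.aemeasurable]
  refine lintegral_congr fun x => ?_
  rw [lintegral_add_measure, lintegral_smul_measure, lintegral_smul_measure,
    lintegral_dirac' _ hF, lintegral_dirac' _ hF]
  rfl

lemma isProbabilityMeasure_joint {μ : Measure (Pt d)} [IsProbabilityMeasure μ]
    {η : Pt d → ℝ} (hη : Measurable η) (hη01 : ∀ x, η x ∈ Set.Icc (0:ℝ) 1) :
    IsProbabilityMeasure (joint μ η) := by
  constructor
  rw [joint, Measure.bind_apply MeasurableSet.univ (measurable_kernel hη).aemeasurable]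
  have h : ∀ x : Pt d, (ENNReal.ofReal (η x) • Measure.dirac (x, (1:ℝ)) +
      ENNReal.ofReal (1 - η x) • Measure.dirac (x, (-1:ℝ))) Set.univ = 1 := by
    intro x
    simp only [Measure.coe_add, Pi.add_apply, Measure.smul_apply, smul_eq_mul,
      measure_univ, mul_one]
    rw [← ENNReal.ofReal_add (hη01 x).1 (by linarith [(hη01 x).2])]
    norm_num
  simp only [h, lintegral_const, measure_univ, mul_one]

lemma integral_joint {μ : Measure (Pt d)} {η : Pt d → ℝ} (hη : Measurable η)
    (hη01 : ∀ x, η x ∈ Set.Icc (0:ℝ) 1) {h : Pt d × ℝ → ℝ} (hm : Measurable h)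
    (h0 : ∀ z, 0 ≤ h z) :
    ∫ z, h z ∂(joint μ η) = ∫ x, η x * h (x, 1) + (1 - η x) * h (x, -1) ∂μ := by
  have hm1 : Measurable fun x : Pt d => h (x, 1) := hm.comp (measurable_id.prodMk measurable_const)
  have hm2 : Measurable fun x : Pt d => h (x, -1) :=
    hm.comp (measurable_id.prodMk measurable_const)
  rw [integral_eq_lintegral_of_nonneg_ae (Filter.Eventually.of_forall h0)
      hm.aestronglyMeasurable,
    integral_eq_lintegral_of_nonneg_ae (f := fun x => η x * h (x, 1) + (1 - η x) * h (x, -1))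
      (Filter.Eventually.of_forall fun x =>
      add_nonneg (mul_nonneg (hη01 x).1 (h0 _))
        (mul_nonneg (by linarith [(hη01 x).2]) (h0 _)))
      ((hη.mul hm1).add ((measurable_const.sub hη).mul hm2)).aestronglyMeasurable,
    lintegral_joint hη hm.ennreal_ofReal]
  congr 1
  refine lintegral_congr fun x => ?_
  rw [ENNReal.ofReal_add (mul_nonneg (hη01 x).1 (h0 _))
      (mul_nonneg (by linarith [(hη01 x).2]) (h0 _)),
    ENNReal.ofReal_mul (hη01 x).1, ENNReal.ofReal_mul (by linarith [(hη01 x).2])]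

lemma cLoss_vals : cLoss 1 1 = 0 ∧ cLoss 1 (-1) = 1 ∧ cLoss (-1) 1 = 1 ∧ cLoss (-1) (-1) = 0 := by
  refine ⟨?_, ?_, ?_, ?_⟩ <;> norm_num [cLoss, sgn]

lemma pt_sq (e v : ℝ) (hv : v = 1 ∨ v = -1) :
    e * (cLoss 1 v - cLoss 1 (sgn (2 * e - 1))) ^ 2 +
        (1 - e) * (cLoss (-1) v - cLoss (-1) (sgn (2 * e - 1))) ^ 2 =
      if v = sgn (2 * e - 1) then 0 else 1 := by
  obtain ⟨c11, c1m, cm1, cmm⟩ := cLoss_vals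
  rcases le_or_gt 0 (2 * e - 1) with h | h
  · have hs : sgn (2 * e - 1) = 1 := if_pos h
    rcases hv with rfl | rfl <;> rw [hs] <;> simp only [c11, c1m, cm1, cmm] <;>
      norm_num <;> ring
  · have hs : sgn (2 * e - 1) = -1 := if_neg (not_le.2 h)
    rcases hv with rfl | rfl <;> rw [hs] <;> simp only [c11, c1m, cm1, cmm] <;>
      norm_num <;> ring

lemma pt_lin (e v : ℝ) (hv : v = 1 ∨ v = -1) :
    e * (cLoss 1 v - cLoss 1 (sgn (2 * e - 1))) +
        (1 - e) * (cLoss (-1) v - cLoss (-1) (sgn (2 * e - 1))) =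
      if v = sgn (2 * e - 1) then 0 else |2 * e - 1| := by
  obtain ⟨c11, c1m, cm1, cmm⟩ := cLoss_vals
  rcases le_or_gt 0 (2 * e - 1) with h | h
  · have hs : sgn (2 * e - 1) = 1 := if_pos h
    rw [abs_of_nonneg h]
    rcases hv with rfl | rfl <;> rw [hs] <;> simp only [c11, c1m, cm1, cmm] <;>
      norm_num <;> ring
  · have hs : sgn (2 * e - 1) = -1 := if_neg (not_le.2 h)
    rw [abs_of_neg h]
    rcases hv with rfl | rfl <;> rw [hs] <;> simp only [c11, c1m, cm1, cmm] <;>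
      norm_num <;> ring

end Aux

theorem statement14 (d : ℕ) (hd : 1 ≤ d) (s : ℝ) (hs : s ∈ Set.Ioc (0 : ℝ) 1)
    (𝒜 : CubePartition d s)
    (μ : Measure (Pt d)) [IsProbabilityMeasure μ] (hμX : μ (cubeX d)ᶜ = 0)
    (η : Pt d → ℝ) (hη : ∀ x, η x ∈ Set.Icc (0 : ℝ) 1) (hmeasη : Measurable η)
    (α cME : ℝ) (hα : 0 < α) (hcME : 0 < cME) (hME : HasME μ η α cME)
    (γ cLC : ℝ) (hγ : 0 < γ) (hcLC : 0 < cLC) (hLC : LowerControl μ η γ cLC)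
    (r : ℝ) (hr : 0 < r)
    (f : Pt d → ℝ) (hf : Measurable f) (hfpm : ∀ x, f x = 1 ∨ f x = -1)
    (t : ℝ) (ht : 0 < t) :
    (∫ z, (rLoss (𝒜.Nr η r) z.1 z.2 (f z.1) - rLoss (𝒜.Nr η r) z.1 z.2 (bayesF η z.1)) ^ 2
        ∂(joint μ η)) ≤
      t⁻¹ *
          (∫ z, (rLoss (𝒜.Nr η r) z.1 z.2 (f z.1) - rLoss (𝒜.Nr η r) z.1 z.2 (bayesF η z.1))
            ∂(joint μ η)) +
        min ((3 * cME * r) ^ α) (cME ^ α * (cLC * t) ^ (α / γ))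
    := by
  classical
  haveI hP : IsProbabilityMeasure (joint μ η) := isProbabilityMeasure_joint hmeasη hη
  set E : Set (Pt d) := 𝒜.Nr η r ∩ {x | f x ≠ bayesF η x} with hEdef
  have hNr : MeasurableSet (𝒜.Nr η r) := measurableSet_Nr 𝒜 η r
  have hbF : Measurable (bayesF η) := measurable_bayesF hmeasη
  have hE : MeasurableSet E :=
    hNr.inter (measurableSet_eq_fun hf hbF).compl
  have ha : Measurable fun z : Pt d × ℝ => rLoss (𝒜.Nr η r) z.1 z.2 (f z.1) :=
    measurable_rLossF hNr hf
  have hb : Measurable fun z : Pt d × ℝ => rLoss (𝒜.Nr η r) z.1 z.2 (bayesF η z.1) :=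
    measurable_rLossF hNr hbF
  have hrl01 : ∀ (T : Set (Pt d)) (x : Pt d) (y u : ℝ),
      rLoss T x y u = 0 ∨ rLoss T x y u = 1 := by
    intro T x y u; unfold rLoss cLoss; split_ifs <;> simp
  -- Step 1: the quadratic term equals (μ E).toReal
  have hsq : (∫ z, (rLoss (𝒜.Nr η r) z.1 z.2 (f z.1) -
        rLoss (𝒜.Nr η r) z.1 z.2 (bayesF η z.1)) ^ 2 ∂(joint μ η)) = (μ E).toReal := by
    rw [integral_joint hmeasη hη (h := fun z : Pt d × ℝ => (rLoss (𝒜.Nr η r) z.1 z.2 (f z.1) -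
        rLoss (𝒜.Nr η r) z.1 z.2 (bayesF η z.1)) ^ 2) ((ha.sub hb).pow_const 2) (fun z => sq_nonneg _)]
    change _ = μ.real E
    rw [← MeasureTheory.integral_indicator_one hE]
    refine integral_congr_ae (Filter.Eventually.of_forall fun x => ?_)
    by_cases hx : x ∈ 𝒜.Nr η r
    · simp only [rLoss, if_pos hx, bayesF]
      rw [pt_sq (η x) (f x) (hfpm x), Set.indicator_apply]
      by_cases hfx : f x = sgn (2 * η x - 1)
      · have hxE : x ∉ E := fun hmem => hmem.2 (by simpa [bayesF] using hfx)
        simp [hfx, hxE]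
      · have hxE : x ∈ E := ⟨hx, by simpa [bayesF] using hfx⟩
        simp [hfx, hxE]
    · have hxE : x ∉ E := fun hmem => hx hmem.1
      simp [rLoss, if_neg hx, Set.indicator_apply, hxE]
  -- Step 2: the linear term equals ∫ x in E, |2 η x - 1| dμ
  have habs_le : ∀ x, |2 * η x - 1| ≤ 1 := by
    intro x; rw [abs_le]; constructor <;> linarith [(hη x).1, (hη x).2]
  have hindmeas : Measurable (E.indicator fun x => |2 * η x - 1|) :=
    (((hmeasη.const_mul 2).sub measurable_const).abs).indicator hE
  have hindint : Integrable (E.indicator fun x => |2 * η x - 1|) μ := by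
    refine Integrable.mono' (integrable_const 1) hindmeas.aestronglyMeasurable
      (Filter.Eventually.of_forall fun x => ?_)
    rw [Real.norm_eq_abs, Set.indicator_apply]
    split_ifs
    · rw [abs_abs]; exact habs_le x
    · simp
  have hlin : (∫ z, (rLoss (𝒜.Nr η r) z.1 z.2 (f z.1) -
        rLoss (𝒜.Nr η r) z.1 z.2 (bayesF η z.1)) ∂(joint μ η)) =
      ∫ x in E, |2 * η x - 1| ∂μ := by
    have hhm : Measurable fun z : Pt d × ℝ => rLoss (𝒜.Nr η r) z.1 z.2 (f z.1) -
        rLoss (𝒜.Nr η r) z.1 z.2 (bayesF η z.1) + 1 := (ha.sub hb).add_const 1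
    have hh0 : ∀ z : Pt d × ℝ, 0 ≤ rLoss (𝒜.Nr η r) z.1 z.2 (f z.1) -
        rLoss (𝒜.Nr η r) z.1 z.2 (bayesF η z.1) + 1 := by
      intro z
      rcases hrl01 (𝒜.Nr η r) z.1 z.2 (f z.1) with h1 | h1 <;>
        rcases hrl01 (𝒜.Nr η r) z.1 z.2 (bayesF η z.1) with h2 | h2 <;>
        rw [h1, h2] <;> norm_num
    have hhint : Integrable (fun z : Pt d × ℝ => rLoss (𝒜.Nr η r) z.1 z.2 (f z.1) -
        rLoss (𝒜.Nr η r) z.1 z.2 (bayesF η z.1) + 1) (joint μ η) := by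
      refine Integrable.mono' (integrable_const 2) hhm.aestronglyMeasurable
        (Filter.Eventually.of_forall fun z => ?_)
      rw [Real.norm_eq_abs]
      rcases hrl01 (𝒜.Nr η r) z.1 z.2 (f z.1) with h1 | h1 <;>
        rcases hrl01 (𝒜.Nr η r) z.1 z.2 (bayesF η z.1) with h2 | h2 <;>
        rw [h1, h2] <;> norm_num
    have key : (∫ z, (rLoss (𝒜.Nr η r) z.1 z.2 (f z.1) -
        rLoss (𝒜.Nr η r) z.1 z.2 (bayesF η z.1) + 1) ∂(joint μ η)) =
        (∫ x, (E.indicator (fun x => |2 * η x - 1|) x + 1) ∂μ) := by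
      rw [integral_joint hmeasη hη hhm hh0]
      refine integral_congr_ae (Filter.Eventually.of_forall fun x => ?_)
      by_cases hx : x ∈ 𝒜.Nr η r
      · simp only [rLoss, if_pos hx, bayesF]
        have hpt := pt_lin (η x) (f x) (hfpm x)
        rw [Set.indicator_apply]
        by_cases hfx : f x = sgn (2 * η x - 1)
        · have hxE : x ∉ E := fun hmem => hmem.2 (by simpa [bayesF] using hfx)
          rw [if_pos hfx] at hpt
          rw [if_neg hxE]
          linear_combination hpt
        · have hxE : x ∈ E := ⟨hx, by simpa [bayesF] using hfx⟩
          rw [if_neg hfx] at hpt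
          rw [if_pos hxE]
          linear_combination hpt
      · have hxE : x ∉ E := fun hmem => hx hmem.1
        simp only [rLoss, if_neg hx, Set.indicator_apply, if_neg hxE]
        ring
    have e1 : (∫ z, (rLoss (𝒜.Nr η r) z.1 z.2 (f z.1) -
        rLoss (𝒜.Nr η r) z.1 z.2 (bayesF η z.1) + 1) ∂(joint μ η)) =
        (∫ z, (rLoss (𝒜.Nr η r) z.1 z.2 (f z.1) -
        rLoss (𝒜.Nr η r) z.1 z.2 (bayesF η z.1)) ∂(joint μ η)) + 1 := by
      rw [integral_add ((hhint.sub (integrable_const 1)).congr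
        (Filter.Eventually.of_forall fun z => by simp [Pi.sub_apply])) (integrable_const 1)]
      simp
    have e2 : (∫ x, (E.indicator (fun x => |2 * η x - 1|) x + 1) ∂μ) =
        (∫ x in E, |2 * η x - 1| ∂μ) + 1 := by
      rw [integral_add hindint (integrable_const 1), MeasureTheory.integral_indicator hE]
      simp
    rw [e1, e2] at key
    linarith
  rw [hsq, hlin]
  -- notation
  set M : ℝ := (μ E).toReal with hM
  set I : ℝ := ∫ x in E, |2 * η x - 1| ∂μ with hI
  have hI0 : 0 ≤ I := setIntegral_nonneg hE fun x _ => abs_nonneg _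
  have hint1 : IntegrableOn (fun x => |2 * η x - 1|) E μ := by
    refine Integrable.integrableOn ?_
    refine Integrable.mono' (integrable_const 1)
      (((hmeasη.const_mul 2).sub measurable_const).abs).aestronglyMeasurable
      (Filter.Eventually.of_forall fun x => ?_)
    rw [Real.norm_eq_abs, abs_abs]; exact habs_le x
  -- Bound A
  have hEsub : E ⊆ {x | Δ η x ≤ 3 * r} ∪ (cubeX d)ᶜ := by
    intro x hxE
    by_cases hxX : x ∈ cubeX d
    · left
      obtain ⟨j, hj, hxj⟩ : ∃ j ∈ 𝒜.JN η r, x ∈ 𝒜.cell j := by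
        simpa [CubePartition.Nr] using hxE.1
      exact hj.2 x ⟨hxj, hxX⟩
    · right; exact hxX
  have hμA : ∀ u : ℝ, 3 * r < u → μ E ≤ ENNReal.ofReal ((cME * u) ^ α) := by
    intro u hu
    calc μ E ≤ μ ({x | Δ η x ≤ 3 * r} ∪ (cubeX d)ᶜ) := measure_mono hEsub
      _ ≤ μ {x | Δ η x ≤ 3 * r} + μ (cubeX d)ᶜ := measure_union_le _ _
      _ = μ {x | Δ η x ≤ 3 * r} := by rw [hμX, add_zero]
      _ ≤ μ {x | Δ η x < u} := measure_mono fun x hx => lt_of_le_of_lt hx hu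
      _ ≤ ENNReal.ofReal ((cME * u) ^ α) := hME u (lt_trans (by positivity) hu)
  have hMA : M ≤ (3 * cME * r) ^ α := by
    have seq : ∀ n : ℕ, M ≤ (cME * (3 * r + 1 / (n + 1))) ^ α := by
      intro n
      have hpos : (0:ℝ) < 1 / (n + 1) := by positivity
      exact ENNReal.toReal_le_of_le_ofReal (Real.rpow_nonneg (by positivity) _)
        (hμA _ (by linarith))
    have h1 : Filter.Tendsto (fun n : ℕ => 3 * r + 1 / ((n:ℝ) + 1)) Filter.atTop
        (nhds (3 * r)) := by
      simpa using (tendsto_const_nhds (x := 3 * r)).add tendsto_one_div_add_atTop_nhds_zero_nat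
    have h2 : Filter.Tendsto (fun n : ℕ => (cME * (3 * r + 1 / ((n:ℝ) + 1))) ^ α)
        Filter.atTop (nhds ((cME * (3 * r)) ^ α)) := by
      exact ((Real.continuousAt_rpow_const _ α (Or.inl (by positivity))).tendsto.comp
        (h1.const_mul cME))
    have := ge_of_tendsto h2 (Filter.Eventually.of_forall seq)
    calc M ≤ (cME * (3 * r)) ^ α := this
      _ = (3 * cME * r) ^ α := by ring_nf
  -- Bound B
  set t' : ℝ := (cLC * t) ^ (1 / γ) with ht'def
  have ht' : 0 < t' := Real.rpow_pos_of_pos (by positivity) _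
  have ht'γ : t' ^ γ = cLC * t := by
    rw [ht'def, ← Real.rpow_mul (by positivity : (0:ℝ) ≤ cLC * t), one_div,
      inv_mul_cancel₀ hγ.ne', Real.rpow_one]
  set S : Set (Pt d) := E ∩ {x | t' ≤ Δ η x} with hSdef
  have hS : MeasurableSet S :=
    hE.inter (measurableSet_le measurable_const (measurable_Δ hmeasη))
  have hsplit : μ E ≤ μ {x | Δ η x < t'} + μ S := by
    refine le_trans (measure_mono ?_) (measure_union_le _ _)
    intro x hx
    by_cases hxd : Δ η x < t'
    · exact Or.inl hxd
    · exact Or.inr ⟨hx, not_lt.1 hxd⟩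
  have h1B : (μ {x | Δ η x < t'}).toReal ≤ cME ^ α * (cLC * t) ^ (α / γ) := by
    have heq : (cME * t') ^ α = cME ^ α * (cLC * t) ^ (α / γ) := by
      rw [ht'def, Real.mul_rpow hcME.le (Real.rpow_nonneg (by positivity) _),
        ← Real.rpow_mul (by positivity : (0:ℝ) ≤ cLC * t)]
      congr 1
      field_simp
    refine ENNReal.toReal_le_of_le_ofReal ?_ ?_
    · rw [← heq]; exact Real.rpow_nonneg (by positivity) _
    · rw [← heq]; exact hME t' ht'
  have h2B : t * (μ S).toReal ≤ I := by
    have step1 : t * (μ S).toReal = ∫ _ in S, t ∂μ := by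
      rw [setIntegral_const, smul_eq_mul, mul_comm]; rfl
    have step2 : (∫ _ in S, t ∂μ) ≤ ∫ x in S, |2 * η x - 1| ∂μ := by
      refine setIntegral_mono_ae_restrict (integrableOn_const (measure_ne_top μ S))
        (hint1.mono_set Set.inter_subset_left) ?_
      filter_upwards [ae_restrict_of_ae hLC, ae_restrict_mem hS] with x hx1 hx2
      have h5 : t' ^ γ ≤ Δ η x ^ γ :=
        Real.rpow_le_rpow ht'.le hx2.2 hγ.le
      rw [ht'γ] at h5
      have h6 : cLC * t ≤ cLC * |2 * η x - 1| := le_trans h5 hx1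
      exact le_of_mul_le_mul_left h6 hcLC
    have step3 : (∫ x in S, |2 * η x - 1| ∂μ) ≤ I := by
      refine setIntegral_mono_set hint1
        (Filter.Eventually.of_forall fun x => abs_nonneg _)
        (HasSubset.Subset.eventuallyLE Set.inter_subset_left)
    linarith
  have hMB : M ≤ t⁻¹ * I + cME ^ α * (cLC * t) ^ (α / γ) := by
    have hfin1 : μ {x | Δ η x < t'} ≠ ⊤ := measure_ne_top μ _
    have hfin2 : μ S ≠ ⊤ := measure_ne_top μ _
    have hMle : M ≤ (μ {x | Δ η x < t'}).toReal + (μ S).toReal := by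
      rw [← ENNReal.toReal_add hfin1 hfin2]
      exact ENNReal.toReal_mono (by simp [hfin1, hfin2, ENNReal.add_ne_top]) hsplit
    have hs2 : (μ S).toReal ≤ t⁻¹ * I := by
      have h7 : (μ S).toReal = t⁻¹ * (t * (μ S).toReal) := by field_simp
      rw [h7]
      exact mul_le_mul_of_nonneg_left h2B (inv_nonneg.2 ht.le)
    linarith
  have htI : 0 ≤ t⁻¹ * I := mul_nonneg (inv_nonneg.2 ht.le) hI0
  rw [← min_add_add_left]
  exact le_min (by linarith) (by linarith)


end RefinedMargin
end
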